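/- Define R(r) = 1/(2√(1 − r²)) for 0 < r < 1, and let R^k denote its k-fold iterate. For every n ≥ 2 and every unit-distance embedding of the complete graph K_n in any Euclidean space ℝᵐ, the images of the vertices lie on a sphere of radius R^{n−2}(1/2) contained in an (n−1)-dimensional affine subspace of ℝᵐ; moreover R^{n−2}(1/2) < √2/2. -/

import Mathlib

/-- A unit-distance embedding of a simple graph `G` in `ℝⁿ`: an injective map sending
adjacent vertices to points at distance 1, such that no other vertex lies on the
closed segment between the endpoints of an edge. -/
def IsUDEmbedding {V : Type*} (G : SimpleGraph V) {n : ℕ}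
    (f : V → EuclideanSpace ℝ (Fin n)) : Prop :=
  Function.Injective f ∧
  (∀ ⦃u v⦄, G.Adj u v → dist (f u) (f v) = 1) ∧
  (∀ ⦃u v⦄, G.Adj u v → ∀ w, w ≠ u → w ≠ v → f w ∉ segment ℝ (f u) (f v))

/-- `G` has a unit-distance embedding in `ℝⁿ`. -/
def HasUDEmbedding {V : Type*} (G : SimpleGraph V) (n : ℕ) : Prop :=
  ∃ f : V → EuclideanSpace ℝ (Fin n), IsUDEmbedding G f

/-- `G` has a unit-distance embedding in `ℝⁿ` whose image lies on a sphere of radius `r`. -/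
def HasSphericalEmbeddingRadius {V : Type*} (G : SimpleGraph V) (n : ℕ) (r : ℝ) : Prop :=
  ∃ f : V → EuclideanSpace ℝ (Fin n), IsUDEmbedding G f ∧
    ∃ c : EuclideanSpace ℝ (Fin n), ∀ v, dist (f v) c = r

/-- `G` has a unit-distance embedding in `ℝⁿ` whose image lies on a sphere
of radius `0 < r < 1`. -/
def HasSphericalEmbedding {V : Type*} (G : SimpleGraph V) (n : ℕ) : Prop :=
  ∃ r : ℝ, 0 < r ∧ r < 1 ∧ HasSphericalEmbeddingRadius G n r

/-- The dimension of a graph: the least `n` such that `G` has a unit-distance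
embedding in `ℝⁿ`. -/
noncomputable def graphDim {V : Type*} (G : SimpleGraph V) : ℕ :=
  sInf {n | HasUDEmbedding G n}

/-- The spherical dimension of a graph: the least `n` such that `G` has a unit-distance
embedding in `ℝⁿ` on a sphere of radius strictly between 0 and 1.  By convention the
spherical dimension of a graph with at most one vertex is `0`. -/
noncomputable def sphericalDim {V : Type*} [Fintype V] (G : SimpleGraph V) : ℕ :=
  if Fintype.card V ≤ 1 then 0 else sInf {n | HasSphericalEmbedding G n}

/-- The join `G + H` of two graphs: disjoint union together with all edges between them. -/
def graphJoin {V W : Type*} (G : SimpleGraph V) (H : SimpleGraph W) :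
    SimpleGraph (V ⊕ W) :=
  SimpleGraph.fromRel (fun x y =>
    match x, y with
    | Sum.inl a, Sum.inl b => G.Adj a b
    | Sum.inr a, Sum.inr b => H.Adj a b
    | Sum.inl _, Sum.inr _ => True
    | Sum.inr _, Sum.inl _ => False)

/-- `H` is a minor of `G` (branch-set formulation, equivalent to being obtainable from `G`
by vertex deletions, edge deletions and edge contractions). -/
def IsMinorOf {W V : Type*} (H : SimpleGraph W) (G : SimpleGraph V) : Prop :=
  ∃ φ : W → Set V,
    (∀ w, (SimpleGraph.induce (φ w) G).Connected) ∧
    (Pairwise fun w w' => Disjoint (φ w) (φ w')) ∧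
    (∀ ⦃w w'⦄, H.Adj w w' → ∃ x ∈ φ w, ∃ y ∈ φ w', G.Adj x y)

/-- `H` is a proper minor of `G`: a minor that is not isomorphic to `G`. -/
def IsProperMinorOf {W V : Type*} (H : SimpleGraph W) (G : SimpleGraph V) : Prop :=
  IsMinorOf H G ∧ ¬ Nonempty (H ≃g G)

/-- `G` is minor minimal with respect to dimension `n`. -/
def MinorMinimalDim {V : Type*} (G : SimpleGraph V) (n : ℕ) : Prop :=
  graphDim G = n ∧
  ∀ (W : Type) [Fintype W] (H : SimpleGraph W), Nonempty W →
    IsProperMinorOf H G → graphDim H < n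

/-- `G` is minor minimal with respect to spherical dimension `n`. -/
def MinorMinimalSDim {V : Type*} [Fintype V] (G : SimpleGraph V) (n : ℕ) : Prop :=
  sphericalDim G = n ∧
  ∀ (W : Type) [Fintype W] (H : SimpleGraph W), Nonempty W →
    IsProperMinorOf H G → sphericalDim H < n

/-- The vertex type of the graph `Sₙ`. -/
def SType : ℕ → Type
  | 0 => Fin 0
  | 1 => Fin 1
  | 2 => Fin 2
  | 3 => Fin 3
  | (n + 4) => Fin (n + 1) ⊕ Fin 3

instance : (n : ℕ) → Fintype (SType n)
  | 0 => inferInstanceAs (Fintype (Fin 0))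
  | 1 => inferInstanceAs (Fintype (Fin 1))
  | 2 => inferInstanceAs (Fintype (Fin 2))
  | 3 => inferInstanceAs (Fintype (Fin 3))
  | (n + 4) => inferInstanceAs (Fintype (Fin (n + 1) ⊕ Fin 3))

/-- The graph `Sₙ`:  `S₁ = ε₁`, `S₂ = ε₂`, `S₃ = ε₃`, and `Sₙ = K_{n-3} + ε₃` for `n ≥ 4`. -/
def SGraph : (n : ℕ) → SimpleGraph (SType n)
  | 0 => ⊥
  | 1 => ⊥
  | 2 => ⊥
  | 3 => ⊥
  | (n + 4) => graphJoin (⊤ : SimpleGraph (Fin (n + 1))) (⊥ : SimpleGraph (Fin 3))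


/-- The radius-increment function `R(r) = 1/(2√(1-r²))`. -/
noncomputable def Rfun (r : ℝ) : ℝ := 1 / (2 * Real.sqrt (1 - r ^ 2))


open RealInnerProductSpace Finset in
/-- Closed form for the iterate of `Rfun` starting at `1/2`. -/
lemma Rfun_iter (k : ℕ) :
    Rfun^[k] (1 / 2) = Real.sqrt (((k : ℝ) + 1) / (2 * ((k : ℝ) + 2))) := by
  induction k with
  | zero =>
    simp only [Function.iterate_zero, id, Nat.cast_zero]
    rw [eq_comm, ((Real.sqrt_eq_iff_eq_sq (by norm_num) (by norm_num)).trans eq_comm)]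
    norm_num
  | succ k ih =>
    rw [Function.iterate_succ_apply', ih]
    have hpos : (0 : ℝ) < 2 * ((k : ℝ) + 2) := by positivity
    have ha : (0 : ℝ) ≤ ((k : ℝ) + 1) / (2 * ((k : ℝ) + 2)) := by positivity
    unfold Rfun
    rw [Real.sq_sqrt ha]
    have h1 : 1 - ((k : ℝ) + 1) / (2 * ((k : ℝ) + 2)) =
        ((k : ℝ) + 3) / (2 * ((k : ℝ) + 2)) := by
      field_simp
      ring
    rw [h1]
    have h3 : (0 : ℝ) < ((k : ℝ) + 3) / (2 * ((k : ℝ) + 2)) := by positivity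
    have hs : (0 : ℝ) < Real.sqrt (((k : ℝ) + 3) / (2 * ((k : ℝ) + 2))) :=
      Real.sqrt_pos.2 h3
    rw [eq_comm, ((Real.sqrt_eq_iff_eq_sq (by positivity) (by positivity)).trans eq_comm)]
    rw [div_pow, one_pow, mul_pow, Real.sq_sqrt h3.le]
    push_cast
    field_simp
    ring

lemma inner_polar {m : ℕ} (a b c : EuclideanSpace ℝ (Fin m)) :
    inner ℝ (a - c) (b - c) = ((‖a - c‖ ^ 2 + ‖b - c‖ ^ 2 - ‖a - b‖ ^ 2) / 2 : ℝ) := by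
  have key : ‖(a - c) - (b - c)‖ ^ 2
      = ‖a - c‖ ^ 2 - 2 * (inner ℝ (a - c) (b - c) : ℝ) + ‖b - c‖ ^ 2 :=
    norm_sub_sq_real _ _
  rw [show (a - c) - (b - c) = a - b by abel] at key
  linarith

open Finset in
/-- Main geometric lemma: `n` points pairwise at distance 1 lie on a sphere of radius
`√((n-1)/(2n))` in an affine subspace of dimension `n - 1`. -/
lemma main_geom {n m : ℕ} (hn : 2 ≤ n) (f : Fin n → EuclideanSpace ℝ (Fin m))
    (hdist : ∀ i j : Fin n, i ≠ j → dist (f i) (f j) = 1) :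
    ∃ (A : AffineSubspace ℝ (EuclideanSpace ℝ (Fin m))) (c : EuclideanSpace ℝ (Fin m)),
      c ∈ A ∧ Module.finrank ℝ A.direction = n - 1 ∧
      ∀ v : Fin n, f v ∈ A ∧ dist (f v) c = Real.sqrt (((n : ℝ) - 1) / (2 * n)) := by
  have hn0 : (n : ℝ) ≠ 0 := by positivity
  have hnd : ∀ i j : Fin n, i ≠ j → ‖f i - f j‖ = 1 := by
    intro i j h; rw [← dist_eq_norm]; exact hdist i j h
  -- value of inner products
  have hval : ∀ v i j : Fin n, i ≠ v → j ≠ v →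
      (inner ℝ (f i - f v) (f j - f v) : ℝ) = if i = j then 1 else 1 / 2 := by
    intro v i j hi hj
    rw [inner_polar, hnd i v hi, hnd j v hj]
    split_ifs with h
    · subst h; simp
    · rw [hnd i j h]; norm_num
  have hval0 : ∀ v j : Fin n, (inner ℝ (f v - f v) (f j - f v) : ℝ) = 0 := by
    intro v j; simp
  have hval0' : ∀ v i : Fin n, (inner ℝ (f i - f v) (f v - f v) : ℝ) = 0 := by
    intro v i; simp
  -- the center
  set c : EuclideanSpace ℝ (Fin m) := (n : ℝ)⁻¹ • ∑ i : Fin n, f i with hc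
  have hcv : ∀ v : Fin n, c - f v = (n : ℝ)⁻¹ • ∑ i : Fin n, (f i - f v) := by
    intro v
    rw [Finset.sum_sub_distrib, smul_sub, Finset.sum_const, Finset.card_univ,
      Fintype.card_fin, ← Nat.cast_smul_eq_nsmul ℝ, smul_smul,
      inv_mul_cancel₀ hn0, one_smul, hc]
  -- the double sum
  have hS : ∀ v : Fin n, ∑ i : Fin n, ∑ j : Fin n,
      (inner ℝ (f i - f v) (f j - f v) : ℝ) = ((n : ℝ) - 1) * n / 2 := by
    intro v
    have hcard : (Finset.univ.erase v).card = n - 1 := by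
      simp [Finset.card_erase_of_mem]
    have hcardR : ((Finset.univ.erase v).card : ℝ) = (n : ℝ) - 1 := by
      rw [hcard, Nat.cast_sub (by omega)]; norm_num
    have hrow : ∀ i ∈ Finset.univ.erase v,
        (∑ j : Fin n, (inner ℝ (f i - f v) (f j - f v) : ℝ))
        = 1 / 2 * ((n : ℝ) - 1) + 1 / 2 := by
      intro i hi
      have hiv : i ≠ v := Finset.ne_of_mem_erase hi
      rw [← Finset.sum_erase (f := fun j => (inner ℝ (f i - f v) (f j - f v) : ℝ))
        (a := v) Finset.univ (hval0' v i)]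
      have : ∀ j ∈ Finset.univ.erase v,
          (inner ℝ (f i - f v) (f j - f v) : ℝ)
          = 1 / 2 + (if i = j then 1 / 2 else 0) := by
        intro j hj
        rw [hval v i j hiv (Finset.ne_of_mem_erase hj)]
        split_ifs <;> norm_num
      rw [Finset.sum_congr rfl this, Finset.sum_add_distrib, Finset.sum_const,
        Finset.sum_ite_eq _ i _, if_pos hi, nsmul_eq_mul, hcardR]
      ring
    rw [← Finset.sum_erase (f := fun i => ∑ j : Fin n, (inner ℝ (f i - f v) (f j - f v) : ℝ))
        (a := v) Finset.univ (by simp),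
      Finset.sum_congr rfl hrow, Finset.sum_const, nsmul_eq_mul, hcardR]
    ring
  -- the squared distance to the center
  have hnormsq : ∀ v : Fin n, ‖c - f v‖ ^ 2 = ((n : ℝ) - 1) / (2 * n) := by
    intro v
    have hw : ‖∑ i : Fin n, (f i - f v)‖ ^ 2 = ((n : ℝ) - 1) * n / 2 := by
      rw [← real_inner_self_eq_norm_sq, sum_inner]
      have : ∀ i ∈ Finset.univ, (inner ℝ (f i - f v) (∑ j : Fin n, (f j - f v)) : ℝ)
          = ∑ j : Fin n, (inner ℝ (f i - f v) (f j - f v) : ℝ) := fun i _ => inner_sum _ _ _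
      rw [Finset.sum_congr rfl this]
      exact hS v
    rw [hcv v, norm_smul, Real.norm_eq_abs, abs_inv, Nat.abs_cast, mul_pow, hw]
    field_simp
  -- distance to the center
  have hdistc : ∀ v : Fin n, dist (f v) c = Real.sqrt (((n : ℝ) - 1) / (2 * n)) := by
    intro v
    rw [dist_eq_norm, ← norm_neg, show -(f v - c) = c - f v by abel,
      ← Real.sqrt_sq (norm_nonneg (c - f v)), hnormsq v]
  -- affine independence
  have i0 : Fin n := ⟨0, by omega⟩
  have hAI : AffineIndependent ℝ f := by
    rw [affineIndependent_iff_linearIndependent_vsub ℝ f i0]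
    rw [Fintype.linearIndependent_iff]
    intro g hg
    simp only [vsub_eq_sub] at hg
    set S : ℝ := ∑ i : {x : Fin n // x ≠ i0}, g i with hSdef
    have hkey : ∀ j : {x : Fin n // x ≠ i0}, g j + S = 0 := by
      intro j
      have h2 := congrArg (fun x => (inner ℝ (f (j : Fin n) - f i0) x : ℝ)) hg
      simp only [inner_sum, inner_zero_right, real_inner_smul_right] at h2
      have h3 : ∀ i : {x : Fin n // x ≠ i0},
          g i * (inner ℝ (f (j : Fin n) - f i0) (f (i : Fin n) - f i0) : ℝ)
          = g i * (1 / 2) + (if i = j then g i * (1 / 2) else 0) := by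
        intro i
        rw [real_inner_comm, hval i0 (i : Fin n) (j : Fin n) i.2 j.2]
        rcases eq_or_ne i j with h | h
        · subst h; simp; ring
        · rw [if_neg (by simpa [Subtype.ext_iff] using h), if_neg h]; ring
      rw [Finset.sum_congr rfl (fun i _ => h3 i), Finset.sum_add_distrib,
        Finset.sum_ite_eq' _ j _, if_pos (Finset.mem_univ j),
        ← Finset.sum_mul, ← hSdef] at h2
      linarith
    have hcard : (Fintype.card {x : Fin n // x ≠ i0} : ℝ) = (n : ℝ) - 1 := by
      rw [Fintype.card_subtype_compl, Fintype.card_subtype_eq, Fintype.card_fin,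
        Nat.cast_sub (by omega)]
      norm_num
    have hSsum : S = ∑ i : {x : Fin n // x ≠ i0}, (-S) := by
      rw [hSdef]
      exact Finset.sum_congr rfl fun i _ => by linarith [hkey i]
    rw [Finset.sum_const, Finset.card_univ, ← Nat.cast_smul_eq_nsmul ℝ,
      smul_eq_mul, hcard] at hSsum
    have hS0 : S = 0 := by
      have : (n : ℝ) * S = 0 := by linarith
      rcases mul_eq_zero.1 this with h | h
      · exact absurd h hn0
      · exact h
    intro j
    have := hkey j
    rw [hS0] at this
    linarith
  refine ⟨affineSpan ℝ (Set.range f), c, ?_, ?_, fun v => ⟨?_, hdistc v⟩⟩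
  · have hcne : (Finset.univ : Finset (Fin n)).card ≠ 0 := by
      simp only [Finset.card_univ, Fintype.card_fin]; omega
    have : Finset.univ.centroid ℝ f ∈ affineSpan ℝ (Set.range f) :=
      centroid_mem_affineSpan_of_card_ne_zero ℝ f hcne
    have hceq : Finset.univ.centroid ℝ f = c := by
      rw [Finset.centroid_def,
        Finset.affineCombination_eq_linear_combination _ _ _
          (Finset.univ.sum_centroidWeights_eq_one_of_card_ne_zero ℝ hcne),
        hc, Finset.smul_sum]
      refine Finset.sum_congr rfl fun i _ => ?_
      simp [Finset.centroidWeights]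
    rwa [hceq] at this
  · rw [direction_affineSpan]
    exact hAI.finrank_vectorSpan (by rw [Fintype.card_fin]; omega)
  · exact mem_affineSpan ℝ (Set.mem_range_self v)


/-- For every `n ≥ 2`, `R^[n-2] (1/2) < √2/2`, and for every unit-distance
embedding of `Kₙ` in any `ℝᵐ`, the images of the vertices lie on a sphere of radius
`R^[n-2] (1/2)` contained in an `(n-1)`-dimensional affine subspace of `ℝᵐ`. -/
theorem stmt13 (n : ℕ) (hn : 2 ≤ n) :
    Rfun^[n - 2] (1 / 2) < Real.sqrt 2 / 2 ∧
    ∀ (m : ℕ) (f : Fin n → EuclideanSpace ℝ (Fin m)),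
      IsUDEmbedding (⊤ : SimpleGraph (Fin n)) f →
      ∃ (A : AffineSubspace ℝ (EuclideanSpace ℝ (Fin m))) (c : EuclideanSpace ℝ (Fin m)),
        c ∈ A ∧ Module.finrank ℝ A.direction = n - 1 ∧
        ∀ v : Fin n, f v ∈ A ∧ dist (f v) c = Rfun^[n - 2] (1 / 2) := by
  constructor
  · rw [Rfun_iter]
    have h1 : Real.sqrt (1 / 2) = Real.sqrt 2 / 2 := by
      rw [((Real.sqrt_eq_iff_eq_sq (by norm_num) (by positivity)).trans eq_comm), div_pow,
        Real.sq_sqrt (by norm_num : (0:ℝ) ≤ 2)]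
      norm_num
    rw [← h1]
    apply Real.sqrt_lt_sqrt (by positivity)
    rw [div_lt_div_iff₀ (by positivity) (by norm_num)]
    ring_nf
    nlinarith [(Nat.cast_pos (α := ℝ)).2 (show 0 < n - 2 + 1 by omega)]
  · intro m f hf
    have hdist : ∀ i j : Fin n, i ≠ j → dist (f i) (f j) = 1 := by
      intro i j h
      exact hf.2.1 ((SimpleGraph.top_adj i j).2 h)
    obtain ⟨A, c, hcA, hrank, hv⟩ := main_geom hn f hdist
    refine ⟨A, c, hcA, hrank, fun v => ⟨(hv v).1, ?_⟩⟩
    rw [(hv v).2, Rfun_iter]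
    congr 1
    rw [Nat.cast_sub hn]
    push_cast
    ring
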